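/- Let H = (1/m) Σ_{i=1}^m (I − P̃_i) be a uniform stoquastic k-local Hamiltonian, let ψ be a non-negative unit vector on ℂ^(Σ^n) with S = supp(ψ) containing no bad strings for H, and suppose there are reals g, h > 0 such that every x ∈ S satisfies ψ_x ≥ 1/√(g·|S|) and ⟨ψ|H|ψ⟩ < 1/h. Then |{x ∈ S : there exist i ∈ {1,…,m} and y ∉ S with ⟨x|P̃_i|y⟩ > 0}| < (m · |Σ|^k · g / h) · |S|. -/

import Mathlib

open Matrix Classical

/-- A uniform stoquastic `k`-local term on strings in `Σ^n`: a set `Q` of at most `k` qudits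
together with a finite family of pairwise disjoint nonempty subsets of `Σ^Q`. -/
structure UTerm (A : Type) [Fintype A] [DecidableEq A] (n k : ℕ) where
  Q : Finset (Fin n)
  hQ : Q.card ≤ k
  J : ℕ
  T : Fin J → Finset ({ i : Fin n // i ∈ Q } → A)
  hT : ∀ j, (T j).Nonempty
  hdisj : ∀ j j', j ≠ j' → Disjoint (T j) (T j')

variable {A : Type} [Fintype A] [DecidableEq A] {n k : ℕ}

/-- The string equal to `t` on `Q` and to `z` on `Qᶜ`. -/
def glue (Q : Finset (Fin n)) (t : { i : Fin n // i ∈ Q } → A)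
    (z : { i : Fin n // i ∉ Q } → A) : Fin n → A :=
  fun i => if h : i ∈ Q then t ⟨i, h⟩ else z ⟨i, h⟩

/-- The subset state `|T_j , z⟩` of a local term. -/
noncomputable def UTerm.tvec (P : UTerm A n k) (j : Fin P.J)
    (z : { i : Fin n // i ∉ P.Q } → A) : (Fin n → A) → ℂ :=
  ((Real.sqrt (P.T j).card : ℂ))⁻¹ •
    (∑ t ∈ P.T j, Pi.single (glue P.Q t z) (1 : ℂ) : (Fin n → A) → ℂ)

/-- The groundspace projector `P̃ = Σ_j Σ_z |T_j,z⟩⟨T_j,z|` of a uniform stoquastic local term. -/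
noncomputable def UTerm.proj (P : UTerm A n k) : Matrix (Fin n → A) (Fin n → A) ℂ :=
  ∑ j : Fin P.J, ∑ z : { i : Fin n // i ∉ P.Q } → A,
    vecMulVec (P.tvec j z) (star (P.tvec j z))

/-- The uniform stoquastic local Hamiltonian `H = (1/m) Σᵢ (I - P̃ᵢ)`. -/
noncomputable def ham {m : ℕ} (terms : Fin m → UTerm A n k) :
    Matrix (Fin n → A) (Fin n → A) ℂ :=
  ((m : ℂ))⁻¹ • ∑ i, (1 - (terms i).proj)

/-- A string is bad for `H` if its diagonal entry in some groundspace projector vanishes. -/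
def Bad {m : ℕ} (terms : Fin m → UTerm A n k) (x : Fin n → A) : Prop :=
  ∃ i, (terms i).proj x x = 0

/-- `H` is `ε`-frustrated: every unit vector has energy at least `ε`. -/
def Frustrated {m : ℕ} (terms : Fin m → UTerm A n k) (ε : ℝ) : Prop :=
  ∀ ψ : (Fin n → A) → ℂ, ∑ x, ‖ψ x‖ ^ 2 = 1 →
    ε ≤ (star ψ ⬝ᵥ (ham terms).mulVec ψ).re

/-- Every qudit lies in at most `d` of the sets `Qᵢ`. -/
def DegreeBound {m : ℕ} (terms : Fin m → UTerm A n k) (d : ℕ) : Prop :=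
  ∀ q : Fin n, (Finset.univ.filter (fun i => q ∈ (terms i).Q)).card ≤ d

/-- The subset state of a finite set `S`. -/
noncomputable def subsetState {X : Type} [DecidableEq X] (S : Finset X) : X → ℂ :=
  fun x => if x ∈ S then ((Real.sqrt S.card : ℂ))⁻¹ else 0
section Aux
variable {A : Type} [Fintype A] [DecidableEq A] {n k : ℕ}

lemma glue_on (Q : Finset (Fin n)) (t : { i : Fin n // i ∈ Q } → A)
    (z : { i : Fin n // i ∉ Q } → A) (i : { i : Fin n // i ∈ Q }) :
    glue Q t z i.1 = t i := by
  simp [glue, i.2]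

lemma glue_off (Q : Finset (Fin n)) (t : { i : Fin n // i ∈ Q } → A)
    (z : { i : Fin n // i ∉ Q } → A) (i : { i : Fin n // i ∉ Q }) :
    glue Q t z i.1 = z i := by
  simp [glue, i.2]

lemma glue_eq_glue {Q : Finset (Fin n)} {t t' : { i : Fin n // i ∈ Q } → A}
    {z z' : { i : Fin n // i ∉ Q } → A} (hg : glue Q t z = glue Q t' z') :
    t = t' ∧ z = z' := by
  constructor
  · funext i
    have := congrFun hg i.1
    rwa [glue_on, glue_on] at this
  · funext i
    have := congrFun hg i.1
    rwa [glue_off, glue_off] at this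

lemma j_unique (P : UTerm A n k) {j j' : Fin P.J} {t : { i : Fin n // i ∈ P.Q } → A}
    (h1 : t ∈ P.T j) (h2 : t ∈ P.T j') : j = j' := by
  by_contra hne
  exact (Finset.disjoint_left.1 (P.hdisj j j' hne)) h1 h2

/-- the 0/1 indicator counting function -/
noncomputable def cnt (P : UTerm A n k) (j : Fin P.J)
    (z : { i : Fin n // i ∉ P.Q } → A) (x : Fin n → A) : ℝ :=
  ∑ t ∈ P.T j, if x = glue P.Q t z then 1 else 0

lemma tvec_apply (P : UTerm A n k) (j : Fin P.J)
    (z : { i : Fin n // i ∉ P.Q } → A) (x : Fin n → A) :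
    P.tvec j z x = (((Real.sqrt (P.T j).card)⁻¹ * cnt P j z x : ℝ) : ℂ) := by
  unfold UTerm.tvec cnt
  simp [Finset.sum_apply, Pi.single_apply, apply_ite, Complex.ofReal_sum]

lemma proj_eq (P : UTerm A n k) (x y : Fin n → A) :
    P.proj x y = ((∑ j, ∑ z, (((P.T j).card : ℝ))⁻¹ * (cnt P j z x * cnt P j z y) : ℝ) : ℂ) := by
  unfold UTerm.proj
  rw [Complex.ofReal_sum]
  rw [Matrix.sum_apply]
  refine Finset.sum_congr rfl fun j _ => ?_
  rw [Complex.ofReal_sum, Matrix.sum_apply]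
  refine Finset.sum_congr rfl fun z _ => ?_
  rw [Matrix.vecMulVec_apply, Pi.star_apply, tvec_apply, tvec_apply,
    Complex.star_def, Complex.conj_ofReal, ← Complex.ofReal_mul]
  have hc : (Real.sqrt (P.T j).card)⁻¹ * (Real.sqrt (P.T j).card)⁻¹
      = (((P.T j).card : ℝ))⁻¹ := by
    rw [← mul_inv, Real.mul_self_sqrt (Nat.cast_nonneg _)]
  exact Complex.ofReal_inj.2 (by rw [← hc]; ring)

end Aux
lemma cnt_nonneg (P : UTerm A n k) (j : Fin P.J) (z) (x : Fin n → A) :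
    0 ≤ cnt P j z x :=
  Finset.sum_nonneg fun t _ => by positivity

lemma cnt_pos (P : UTerm A n k) {j : Fin P.J} {z} {x : Fin n → A}
    (h : 0 < cnt P j z x) : ∃ t ∈ P.T j, x = glue P.Q t z := by
  by_contra hc
  push_neg at hc
  have : cnt P j z x = 0 := Finset.sum_eq_zero fun t ht => by simp [hc t ht]
  simp [this] at h

lemma proj_pos_elim (P : UTerm A n k) {x y : Fin n → A}
    (h : 0 < (P.proj x y).re) :
    ∃ j z, (∃ t ∈ P.T j, x = glue P.Q t z) ∧ (∃ t ∈ P.T j, y = glue P.Q t z) := by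
  rw [proj_eq, Complex.ofReal_re] at h
  have h0 : ∑ j : Fin P.J, (0:ℝ) < ∑ j, ∑ z, (((P.T j).card : ℝ))⁻¹ * (cnt P j z x * cnt P j z y) := by
    simpa using h
  obtain ⟨j, -, hj⟩ := Finset.exists_lt_of_sum_lt h0
  have h1 : ∑ z : { i : Fin n // i ∉ P.Q } → A, (0:ℝ) <
      ∑ z, (((P.T j).card : ℝ))⁻¹ * (cnt P j z x * cnt P j z y) := by
    simpa using hj
  obtain ⟨z, -, hz⟩ := Finset.exists_lt_of_sum_lt h1
  have hN : (0:ℝ) < (((P.T j).card : ℝ))⁻¹ * (cnt P j z x * cnt P j z y) := hz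
  have hx : 0 < cnt P j z x := by
    rcases (cnt_nonneg P j z x).lt_or_eq with h' | h'
    · exact h'
    · rw [← h'] at hN; simp at hN
  have hy : 0 < cnt P j z y := by
    rcases (cnt_nonneg P j z y).lt_or_eq with h' | h'
    · exact h'
    · rw [← h'] at hN; simp at hN
  exact ⟨j, z, cnt_pos P hx, cnt_pos P hy⟩

lemma quad_re {X : Type} [Fintype X] [DecidableEq X] (M : Matrix X X ℂ)
    (ψ : X → ℂ) (r : X → ℝ) (hψ : ∀ x, ψ x = ((r x : ℝ) : ℂ)) :
    (star ψ ⬝ᵥ M.mulVec ψ).re = ∑ x, ∑ y, r x * (M x y).re * r y := by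
  simp only [dotProduct, Matrix.mulVec, Pi.star_apply]
  rw [Complex.re_sum]
  refine Finset.sum_congr rfl fun x _ => ?_
  rw [hψ, Complex.star_def, Complex.conj_ofReal, Complex.re_ofReal_mul, Complex.re_sum,
    Finset.mul_sum]
  refine Finset.sum_congr rfl fun y _ => ?_
  rw [hψ y]
  rw [show (M x y * ((r y : ℝ):ℂ)).re = (M x y).re * r y by
    simp [Complex.mul_re]]
  ring
lemma sum_r_cnt (P : UTerm A n k) (j : Fin P.J) (z) (r : (Fin n → A) → ℝ) :
    ∑ x, r x * cnt P j z x = ∑ t ∈ P.T j, r (glue P.Q t z) := by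
  unfold cnt
  simp only [Finset.mul_sum, mul_ite, mul_one, mul_zero]
  rw [Finset.sum_comm]
  refine Finset.sum_congr rfl fun t _ => ?_
  simp [Finset.sum_ite_eq]

lemma sum_swap4 {X Y J Z : Type} [Fintype X] [Fintype Y] [Fintype J] [Fintype Z]
    (F : X → Y → J → Z → ℝ) :
    ∑ x, ∑ y, ∑ j, ∑ z, F x y j z = ∑ j, ∑ z, ∑ x, ∑ y, F x y j z := by
  have h1 : ∀ x : X, ∑ y : Y, ∑ j : J, ∑ z : Z, F x y j z
      = ∑ j : J, ∑ z : Z, ∑ y : Y, F x y j z := by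
    intro x
    rw [Finset.sum_comm]
    exact Finset.sum_congr rfl fun j _ => Finset.sum_comm
  simp only [h1]
  rw [Finset.sum_comm]
  exact Finset.sum_congr rfl fun j _ => Finset.sum_comm

lemma overlap_re (P : UTerm A n k) (ψ : (Fin n → A) → ℂ) (r : (Fin n → A) → ℝ)
    (hψ : ∀ x, ψ x = ((r x : ℝ) : ℂ)) :
    (star ψ ⬝ᵥ (P.proj).mulVec ψ).re
      = ∑ j, ∑ z, (((P.T j).card : ℝ))⁻¹ * (∑ t ∈ P.T j, r (glue P.Q t z)) ^ 2 := by
  rw [quad_re _ ψ r hψ]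
  have step1 : ∀ x y : Fin n → A, r x * (P.proj x y).re * r y
      = ∑ j, ∑ z, (((P.T j).card : ℝ))⁻¹ * ((r x * cnt P j z x) * (cnt P j z y * r y)) := by
    intro x y
    rw [proj_eq, Complex.ofReal_re, Finset.mul_sum, Finset.sum_mul]
    refine Finset.sum_congr rfl fun jj _ => ?_
    rw [Finset.mul_sum, Finset.sum_mul]
    exact Finset.sum_congr rfl fun zz _ => by ring
  simp only [step1]
  rw [sum_swap4]
  refine Finset.sum_congr rfl fun j _ => Finset.sum_congr rfl fun z _ => ?_
  simp only [← Finset.mul_sum]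
  rw [← Finset.sum_mul]
  rw [show ∑ y, cnt P j z y * r y = ∑ y, r y * cnt P j z y from
    Finset.sum_congr rfl fun y _ => mul_comm _ _]
  rw [sum_r_cnt]; ring
lemma my_sum_mulVec {X ι : Type} [Fintype X] [DecidableEq X] (s : Finset ι)
    (M : ι → Matrix X X ℂ) (v : X → ℂ) :
    (∑ i ∈ s, M i).mulVec v = ∑ i ∈ s, (M i).mulVec v := by
  ext x
  simp only [Matrix.mulVec, dotProduct, Finset.sum_apply, Matrix.sum_apply,
    Finset.sum_mul]
  exact Finset.sum_comm

lemma my_dotProduct_sum {X ι : Type} [Fintype X] (s : Finset ι)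
    (u : X → ℂ) (v : ι → X → ℂ) :
    u ⬝ᵥ (∑ i ∈ s, v i) = ∑ i ∈ s, u ⬝ᵥ v i := by
  simp only [dotProduct, Finset.sum_apply, Finset.mul_sum]
  exact Finset.sum_comm

lemma norm_dot_re (ψ : (Fin n → A) → ℂ) (r : (Fin n → A) → ℝ)
    (hψ : ∀ x, ψ x = ((r x : ℝ) : ℂ)) :
    (star ψ ⬝ᵥ ψ).re = ∑ x, r x ^ 2 := by
  simp only [dotProduct, Pi.star_apply]
  rw [Complex.re_sum]
  refine Finset.sum_congr rfl fun x _ => ?_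
  rw [hψ, Complex.star_def, Complex.conj_ofReal, ← Complex.ofReal_mul, Complex.ofReal_re, sq]

lemma energy_re {m : ℕ} (terms : Fin m → UTerm A n k) (ψ : (Fin n → A) → ℂ)
    (r : (Fin n → A) → ℝ) (hψ : ∀ x, ψ x = ((r x : ℝ) : ℂ)) :
    (star ψ ⬝ᵥ (ham terms).mulVec ψ).re
      = (m : ℝ)⁻¹ * ∑ i, ((∑ x, r x ^ 2) -
          ∑ j, ∑ z, ((((terms i).T j).card : ℝ))⁻¹ *
            (∑ t ∈ (terms i).T j, r (glue (terms i).Q t z)) ^ 2) := by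
  unfold ham
  rw [Matrix.smul_mulVec]
  rw [show ((m : ℂ))⁻¹ = (((m : ℝ)⁻¹ : ℝ) : ℂ) by push_cast; ring]
  rw [dotProduct_smul, smul_eq_mul, Complex.re_ofReal_mul]
  congr 1
  rw [my_sum_mulVec, my_dotProduct_sum, Complex.re_sum]
  refine Finset.sum_congr rfl fun i _ => ?_
  rw [Matrix.sub_mulVec, Matrix.one_mulVec, dotProduct_sub, Complex.sub_re,
    norm_dot_re ψ r hψ, overlap_re (terms i) ψ r hψ]
/-- index set of all (j, z, t) with t ∈ T j -/
noncomputable def Dset (P : UTerm A n k) :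
    Finset (Fin P.J × ({ i : Fin n // i ∉ P.Q } → A) × ({ i : Fin n // i ∈ P.Q } → A)) :=
  Finset.univ.filter (fun p => p.2.2 ∈ P.T p.1)

def gl (P : UTerm A n k)
    (p : Fin P.J × ({ i : Fin n // i ∉ P.Q } → A) × ({ i : Fin n // i ∈ P.Q } → A)) :
    Fin n → A := glue P.Q p.2.2 p.2.1

lemma sum_Dset (P : UTerm A n k) (f : (Fin n → A) → ℝ) :
    ∑ p ∈ Dset P, f (gl P p) = ∑ j, ∑ z, ∑ t ∈ P.T j, f (glue P.Q t z) := by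
  unfold Dset
  rw [Finset.sum_filter, Fintype.sum_prod_type]
  refine Finset.sum_congr rfl fun j _ => ?_
  rw [Fintype.sum_prod_type]
  refine Finset.sum_congr rfl fun z _ => ?_
  simp [gl, Finset.sum_ite_mem]

lemma gl_injOn (P : UTerm A n k) : ∀ p ∈ Dset P, ∀ q ∈ Dset P,
    gl P p = gl P q → p = q := by
  intro p hp q hq hgl
  simp only [Dset, Finset.mem_filter, Finset.mem_univ, true_and] at hp hq
  obtain ⟨ht, hz⟩ := glue_eq_glue hgl
  have hj : p.1 = q.1 := j_unique P (ht ▸ hp) hq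
  exact Prod.ext hj (Prod.ext hz ht)

lemma group_unique (P : UTerm A n k) {j j' : Fin P.J} {t t'} {z z'}
    (h1 : t ∈ P.T j) (h2 : t' ∈ P.T j') (he : glue P.Q t z = glue P.Q t' z') :
    j = j' ∧ z = z' ∧ t = t' := by
  obtain ⟨ht, hz⟩ := glue_eq_glue he
  exact ⟨j_unique P h1 (ht ▸ h2), hz, ht⟩

lemma card_T_le (hA1 : 1 ≤ Fintype.card A) (P : UTerm A n k) (j : Fin P.J) :
    ((P.T j).card : ℝ) ≤ (Fintype.card A : ℝ) ^ k := by
  have h1 : (P.T j).card ≤ Fintype.card ({ i : Fin n // i ∈ P.Q } → A) :=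
    Finset.card_le_univ _
  have h2 : Fintype.card ({ i : Fin n // i ∈ P.Q } → A) = Fintype.card A ^ P.Q.card := by
    rw [Fintype.card_fun, Fintype.card_coe]
  have h3 : Fintype.card A ^ P.Q.card ≤ Fintype.card A ^ k :=
    Nat.pow_le_pow_right hA1 P.hQ
  calc ((P.T j).card : ℝ) ≤ ((Fintype.card A ^ k : ℕ) : ℝ) := by
        exact_mod_cast (h1.trans (h2 ▸ h3))
    _ = (Fintype.card A : ℝ) ^ k := by push_cast; ring

lemma key_ineq (hA1 : 1 ≤ Fintype.card A) (P : UTerm A n k)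
    (r : (Fin n → A) → ℝ) (hr : ∀ x, 0 ≤ r x) :
    ∑ x ∈ Finset.univ.filter (fun x => ∃ y, r y = 0 ∧ 0 < ((P.proj) x y).re), r x ^ 2
      ≤ (Fintype.card A : ℝ) ^ k *
        ((∑ x, r x ^ 2) -
          ∑ j, ∑ z, (((P.T j).card : ℝ))⁻¹ * (∑ t ∈ P.T j, r (glue P.Q t z)) ^ 2) := by
  classical
  set B := Finset.univ.filter (fun x => ∃ y, r y = 0 ∧ 0 < ((P.proj) x y).re) with hB
  -- B is contained in the image of Dset under gl
  have hBsub : B ⊆ (Dset P).image (gl P) := by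
    intro x hx
    rw [hB, Finset.mem_filter] at hx
    obtain ⟨-, y, hy0, hpos⟩ := hx
    obtain ⟨j, z, ⟨t, ht, hxt⟩, -⟩ := proj_pos_elim P hpos
    exact Finset.mem_image.2 ⟨⟨j, z, t⟩, by simp [Dset, ht], hxt.symm⟩
  -- step (i)
  have stepi : ∑ x ∈ B, r x ^ 2
      ≤ ∑ j, ∑ z, ∑ t ∈ P.T j, (if glue P.Q t z ∈ B then r (glue P.Q t z) ^ 2 else 0) := by
    rw [← sum_Dset P (fun x => if x ∈ B then r x ^ 2 else 0),
      ← Finset.sum_image (f := fun x => if x ∈ B then r x ^ 2 else 0) (gl_injOn P)]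
    calc ∑ x ∈ B, r x ^ 2 = ∑ x ∈ B, (if x ∈ B then r x ^ 2 else 0) := by
          refine Finset.sum_congr rfl fun x hx => by simp [hx]
      _ ≤ _ := Finset.sum_le_sum_of_subset_of_nonneg hBsub
          (fun x _ _ => by positivity)
  -- step (iii) helper : total square sum over groups at most global
  have stepiii : ∑ j, ∑ z, ∑ t ∈ P.T j, r (glue P.Q t z) ^ 2 ≤ ∑ x, r x ^ 2 := by
    rw [← sum_Dset P (fun x => r x ^ 2),
      ← Finset.sum_image (f := fun x => r x ^ 2) (gl_injOn P)]
    exact Finset.sum_le_sum_of_subset_of_nonneg (Finset.subset_univ _)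
      (fun x _ _ => by positivity)
  -- step (ii): per-group bound
  have stepii : ∀ j : Fin P.J, ∀ z : { i : Fin n // i ∉ P.Q } → A,
      ∑ t ∈ P.T j, (if glue P.Q t z ∈ B then r (glue P.Q t z) ^ 2 else 0)
        ≤ (Fintype.card A : ℝ) ^ k *
          ((∑ t ∈ P.T j, r (glue P.Q t z) ^ 2) -
            (((P.T j).card : ℝ))⁻¹ * (∑ t ∈ P.T j, r (glue P.Q t z)) ^ 2) := by
    intro j z
    set Nr : ℝ := (((P.T j).card : ℝ)) with hNrdef
    set Qs : ℝ := ∑ t ∈ P.T j, r (glue P.Q t z) ^ 2 with hQsdef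
    set s : ℝ := ∑ t ∈ P.T j, r (glue P.Q t z) with hsdef
    have hNrpos : 0 < Nr := by
      have := (P.hT j).card_pos
      positivity
    have hQs : 0 ≤ Qs := Finset.sum_nonneg fun t _ => by positivity
    have hC : Nr ≤ (Fintype.card A : ℝ) ^ k := card_T_le hA1 P j
    have hCpos : (0:ℝ) < (Fintype.card A : ℝ) ^ k := lt_of_lt_of_le hNrpos hC
    by_cases hcase : ∃ t₀ ∈ P.T j, glue P.Q t₀ z ∈ B
    · obtain ⟨t₀, ht₀, hmem⟩ := hcase
      rw [hB, Finset.mem_filter] at hmem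
      obtain ⟨-, y, hy0, hpos⟩ := hmem
      obtain ⟨j', z', ⟨t₁, ht₁, hx1⟩, ⟨t₂, ht₂, hy2⟩⟩ := proj_pos_elim P hpos
      obtain ⟨hjj, hzz, htt⟩ := group_unique P ht₁ ht₀ hx1.symm
      rw [hjj] at ht₂
      rw [hzz] at hy2
      -- y = glue t₂ z with r y = 0, t₂ ∈ T j
      have hzero : r (glue P.Q t₂ z) = 0 := by rw [← hy2]; exact hy0
      -- LHS ≤ Qs
      have hL : ∑ t ∈ P.T j, (if glue P.Q t z ∈ B then r (glue P.Q t z) ^ 2 else 0) ≤ Qs := by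
        rw [hQsdef]
        refine Finset.sum_le_sum fun t _ => ?_
        split <;> [exact le_rfl; positivity]
      refine hL.trans ?_
      -- Cauchy-Schwarz over erase t₂
      have hs_erase : s = ∑ t ∈ (P.T j).erase t₂, r (glue P.Q t z) :=
        (Finset.sum_erase (f := fun t => r (glue P.Q t z)) (P.T j) hzero).symm
      have hcs : s ^ 2 ≤ (Nr - 1) * Qs := by
        rw [hs_erase]
        calc (∑ t ∈ (P.T j).erase t₂, r (glue P.Q t z)) ^ 2
            ≤ ((P.T j).erase t₂).card * ∑ t ∈ (P.T j).erase t₂, r (glue P.Q t z) ^ 2 :=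
              sq_sum_le_card_mul_sum_sq
          _ ≤ (Nr - 1) * Qs := by
              have hcard : (((P.T j).erase t₂).card : ℝ) = Nr - 1 := by
                rw [Finset.card_erase_of_mem ht₂, hNrdef]
                have := (P.hT j).card_pos
                push_cast [Nat.cast_sub (Nat.one_le_iff_ne_zero.2 this.ne')]
                ring
              have hsub : ∑ t ∈ (P.T j).erase t₂, r (glue P.Q t z) ^ 2 ≤ Qs :=
                Finset.sum_le_sum_of_subset_of_nonneg (Finset.erase_subset _ _)
                  (fun t _ _ => by positivity)
              have h0 : (0:ℝ) ≤ Nr - 1 := by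
                have h01 : (1:ℝ) ≤ ((P.T j).card : ℝ) := by
                  exact_mod_cast (P.hT j).card_pos
                rw [hNrdef]; linarith
              calc (((P.T j).erase t₂).card : ℝ) * ∑ t ∈ (P.T j).erase t₂, r (glue P.Q t z) ^ 2
                  = (Nr - 1) * ∑ t ∈ (P.T j).erase t₂, r (glue P.Q t z) ^ 2 := by rw [hcard]
                _ ≤ (Nr - 1) * Qs := mul_le_mul_of_nonneg_left hsub h0
      -- arithmetic
      have h1 : Nr⁻¹ * s ^ 2 ≤ Qs - Nr⁻¹ * Qs := by
        have h1' : Nr⁻¹ * s ^ 2 ≤ Nr⁻¹ * ((Nr - 1) * Qs) :=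
          mul_le_mul_of_nonneg_left hcs (by positivity)
        have h1'' : Nr⁻¹ * ((Nr - 1) * Qs) = Qs - Nr⁻¹ * Qs := by
          field_simp
        linarith
      have h2 : Nr⁻¹ * Qs ≤ Qs - Nr⁻¹ * s ^ 2 := by linarith
      have h3 : Qs = Nr * (Nr⁻¹ * Qs) := by field_simp
      calc Qs = Nr * (Nr⁻¹ * Qs) := h3
        _ ≤ (Fintype.card A : ℝ) ^ k * (Qs - Nr⁻¹ * s ^ 2) :=
            mul_le_mul hC h2 (mul_nonneg (inv_nonneg.2 hNrpos.le) hQs) hCpos.le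
    · -- no element of the group is in B : LHS = 0
      push_neg at hcase
      have hL0 : ∑ t ∈ P.T j, (if glue P.Q t z ∈ B then r (glue P.Q t z) ^ 2 else 0) = 0 :=
        Finset.sum_eq_zero fun t ht => by simp [hcase t ht]
      rw [hL0]
      have hcs : s ^ 2 ≤ Nr * Qs := by
        rw [hsdef, hQsdef, hNrdef]
        exact sq_sum_le_card_mul_sum_sq
      have hle : Nr⁻¹ * s ^ 2 ≤ Qs := by
        rw [inv_mul_le_iff₀ hNrpos]
        exact hcs
      have : (0:ℝ) ≤ Qs - Nr⁻¹ * s ^ 2 := by linarith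
      positivity
  -- assemble
  refine stepi.trans ?_
  have h4 : ∑ j, ∑ z, ∑ t ∈ P.T j, (if glue P.Q t z ∈ B then r (glue P.Q t z) ^ 2 else 0)
      ≤ ∑ j, ∑ z, (Fintype.card A : ℝ) ^ k *
          ((∑ t ∈ P.T j, r (glue P.Q t z) ^ 2) -
            (((P.T j).card : ℝ))⁻¹ * (∑ t ∈ P.T j, r (glue P.Q t z)) ^ 2) :=
    Finset.sum_le_sum fun j _ => Finset.sum_le_sum fun z _ => stepii j z
  refine h4.trans ?_
  simp only [← Finset.mul_sum]
  refine mul_le_mul_of_nonneg_left ?_ (by positivity)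
  have hW : ∑ jj : Fin P.J, ((((P.T jj).card : ℝ))⁻¹ *
        ∑ zz : { i : Fin n // i ∉ P.Q } → A, (∑ t ∈ P.T jj, r (glue P.Q t zz)) ^ 2)
      = ∑ jj : Fin P.J, ∑ zz : { i : Fin n // i ∉ P.Q } → A,
          (((P.T jj).card : ℝ))⁻¹ * (∑ t ∈ P.T jj, r (glue P.Q t zz)) ^ 2 :=
    Finset.sum_congr rfl fun jj _ => Finset.mul_sum _ _ _
  rw [hW]
  simp only [Finset.sum_sub_distrib]
  exact sub_le_sub_right stepiii _

/-- A nice low-energy state has a small boundary: if `ψ` is a non-negative unit vector with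
support `S` containing no bad strings, all amplitudes at least `1/√(g|S|)`, and energy less
than `1/h`, then fewer than `(m|Σ|^k g/h)|S|` strings of `S` are connected to a string
outside `S`. -/
theorem stmt18 {A : Type} [Fintype A] [DecidableEq A] (hA : 2 ≤ Fintype.card A)
    {n k m : ℕ} (hn : 1 ≤ n) (hk : 1 ≤ k) (hm : 1 ≤ m)
    (terms : Fin m → UTerm A n k)
    (ψ : (Fin n → A) → ℂ) (hψnn : ∀ x, (ψ x).im = 0 ∧ 0 ≤ (ψ x).re)
    (hψunit : ∑ x, ‖ψ x‖ ^ 2 = 1)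
    (S : Finset (Fin n → A)) (hS : ↑S = {x | ψ x ≠ 0})
    (hnobad : ∀ x ∈ S, ¬ Bad terms x)
    (g h : ℝ) (hg : 0 < g) (hh : 0 < h)
    (hlb : ∀ x ∈ S, 1 / Real.sqrt (g * S.card) ≤ (ψ x).re)
    (hen : (star ψ ⬝ᵥ (ham terms).mulVec ψ).re < 1 / h) :
    ((S.filter (fun x => ∃ i, ∃ y, y ∉ S ∧ 0 < ((terms i).proj x y).re)).card : ℝ) <
      (m * (Fintype.card A : ℝ) ^ k * g / h) * (S.card : ℝ) := by
  classical
  set r : (Fin n → A) → ℝ := fun x => (ψ x).re with hrdef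
  have hψr : ∀ x, ψ x = ((r x : ℝ) : ℂ) := fun x => by
    apply Complex.ext <;> simp [hrdef, (hψnn x).1]
  have hrnn : ∀ x, 0 ≤ r x := fun x => (hψnn x).2
  have hunit : ∑ x, r x ^ 2 = 1 := by
    rw [← hψunit]
    refine Finset.sum_congr rfl fun x _ => ?_
    rw [hψr x, Complex.norm_real, Real.norm_eq_abs, abs_of_nonneg (hrnn x)]
  have hmem : ∀ y, y ∉ S ↔ r y = 0 := by
    intro y
    have h1 : y ∈ S ↔ ψ y ≠ 0 := by
      constructor
      · intro hy; exact (Set.ext_iff.1 hS y).1 hy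
      · intro hy; exact (Set.ext_iff.1 hS y).2 hy
    have h2 : ψ y = 0 ↔ r y = 0 := by
      rw [hψr y]; exact_mod_cast Complex.ofReal_eq_zero
    constructor
    · intro hy; exact h2.1 (not_not.1 fun hne => hy (h1.2 hne))
    · intro hy hyS; exact (h1.1 hyS) (h2.2 hy)
  have hSne : S.Nonempty := by
    by_contra hempty
    rw [Finset.not_nonempty_iff_eq_empty] at hempty
    have hzero : ∑ x, r x ^ 2 = 0 := Finset.sum_eq_zero fun x _ => by
      rw [(hmem x).1 (by simp [hempty])]; ring
    rw [hunit] at hzero; norm_num at hzero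
  have hSpos : (0:ℝ) < (S.card : ℝ) := by exact_mod_cast hSne.card_pos
  have hA1 : 1 ≤ Fintype.card A := le_trans one_le_two hA
  set C : ℝ := (Fintype.card A : ℝ) ^ k with hCdef
  have hCpos : (0:ℝ) < C := by
    rw [hCdef]
    have : (0:ℝ) < (Fintype.card A : ℝ) := by exact_mod_cast lt_of_lt_of_le two_pos hA
    positivity
  have hmpos : (0:ℝ) < (m : ℝ) := by exact_mod_cast hm
  set Bd := S.filter (fun x => ∃ i, ∃ y, y ∉ S ∧ 0 < ((terms i).proj x y).re) with hBdDef
  set Bi := fun i : Fin m => Finset.univ.filter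
    (fun x => ∃ y, r y = 0 ∧ 0 < ((terms i).proj x y).re) with hBiDef
  -- claim 1
  have claim1 : ∑ x ∈ Bd, r x ^ 2 ≤ ∑ i, ∑ x ∈ Bi i, r x ^ 2 := by
    have hstep : ∀ x ∈ Bd, r x ^ 2 ≤ ∑ i, (if x ∈ Bi i then r x ^ 2 else 0) := by
      intro x hx
      rw [hBdDef, Finset.mem_filter] at hx
      obtain ⟨-, i, y, hyS, hpos⟩ := hx
      have hxBi : x ∈ Bi i := by
        rw [hBiDef]; exact Finset.mem_filter.2 ⟨Finset.mem_univ _, y, (hmem y).1 hyS, hpos⟩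
      have := Finset.single_le_sum (f := fun i => if x ∈ Bi i then r x ^ 2 else 0)
        (fun i _ => by positivity) (Finset.mem_univ i)
      simpa [hxBi] using this
    calc ∑ x ∈ Bd, r x ^ 2 ≤ ∑ x ∈ Bd, ∑ i, (if x ∈ Bi i then r x ^ 2 else 0) :=
          Finset.sum_le_sum hstep
      _ = ∑ i, ∑ x ∈ Bd, (if x ∈ Bi i then r x ^ 2 else 0) := Finset.sum_comm
      _ ≤ ∑ i, ∑ x : Fin n → A, (if x ∈ Bi i then r x ^ 2 else 0) :=
          Finset.sum_le_sum fun i _ => Finset.sum_le_sum_of_subset_of_nonneg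
            (Finset.subset_univ _) (fun x _ _ => by positivity)
      _ = ∑ i, ∑ x ∈ Bi i, r x ^ 2 := Finset.sum_congr rfl fun i _ => by
          rw [Finset.sum_ite_mem, Finset.univ_inter]
  -- claim 2 : per-term bound
  have claim2 : ∀ i : Fin m, ∑ x ∈ Bi i, r x ^ 2
      ≤ C * (1 - ∑ j, ∑ z, ((((terms i).T j).card : ℝ))⁻¹ *
          (∑ t ∈ (terms i).T j, r (glue (terms i).Q t z)) ^ 2) := by
    intro i
    have := key_ineq hA1 (terms i) r hrnn
    rw [hunit] at this
    exact this
  -- energy identity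
  have hE := energy_re terms ψ r hψr
  rw [hunit] at hE
  have hsum_eq : ∑ i, (1 - ∑ j, ∑ z, ((((terms i).T j).card : ℝ))⁻¹ *
      (∑ t ∈ (terms i).T j, r (glue (terms i).Q t z)) ^ 2)
      = (m : ℝ) * (star ψ ⬝ᵥ (ham terms).mulVec ψ).re := by
    rw [hE, ← mul_assoc, mul_inv_cancel₀ hmpos.ne', one_mul]
  -- claim 4 : lower bound on each boundary amplitude
  have hgs : (0:ℝ) < g * (S.card : ℝ) := mul_pos hg hSpos
  have claim4 : (Bd.card : ℝ) * (g * (S.card : ℝ))⁻¹ ≤ ∑ x ∈ Bd, r x ^ 2 := by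
    have hterm : ∀ x ∈ Bd, (g * (S.card : ℝ))⁻¹ ≤ r x ^ 2 := by
      intro x hx
      have hxS : x ∈ S := Finset.mem_of_mem_filter x hx
      have hlbx := hlb x hxS
      have h0 : (0:ℝ) ≤ 1 / Real.sqrt (g * S.card) := div_nonneg zero_le_one (Real.sqrt_nonneg _)
      have := mul_self_le_mul_self h0 hlbx
      calc (g * (S.card : ℝ))⁻¹
          = (1 / Real.sqrt (g * S.card)) * (1 / Real.sqrt (g * S.card)) := by
            rw [div_mul_div_comm, one_mul, Real.mul_self_sqrt hgs.le, one_div]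
        _ ≤ r x * r x := this
        _ = r x ^ 2 := (sq (r x)).symm
    calc (Bd.card : ℝ) * (g * (S.card : ℝ))⁻¹
        = Bd.card • (g * (S.card : ℝ))⁻¹ := by rw [nsmul_eq_mul]
      _ ≤ ∑ x ∈ Bd, r x ^ 2 := Finset.card_nsmul_le_sum _ _ _ hterm
  -- main chain
  have hmain : (Bd.card : ℝ) * (g * (S.card : ℝ))⁻¹ < C * ((m : ℝ) * (1 / h)) := by
    calc (Bd.card : ℝ) * (g * (S.card : ℝ))⁻¹
        ≤ ∑ x ∈ Bd, r x ^ 2 := claim4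
      _ ≤ ∑ i, ∑ x ∈ Bi i, r x ^ 2 := claim1
      _ ≤ ∑ i, C * (1 - ∑ j, ∑ z, ((((terms i).T j).card : ℝ))⁻¹ *
            (∑ t ∈ (terms i).T j, r (glue (terms i).Q t z)) ^ 2) :=
          Finset.sum_le_sum fun i _ => claim2 i
      _ = C * ((m : ℝ) * (star ψ ⬝ᵥ (ham terms).mulVec ψ).re) := by
          rw [← Finset.mul_sum, hsum_eq]
      _ < C * ((m : ℝ) * (1 / h)) := by
          exact mul_lt_mul_of_pos_left (mul_lt_mul_of_pos_left hen hmpos) hCpos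
  have hfin : (Bd.card : ℝ) < C * ((m : ℝ) * (1 / h)) * (g * (S.card : ℝ)) := by
    have h2 := mul_lt_mul_of_pos_right hmain hgs
    calc (Bd.card : ℝ) = (Bd.card : ℝ) * (g * (S.card : ℝ))⁻¹ * (g * (S.card : ℝ)) := by
          rw [mul_assoc, inv_mul_cancel₀ hgs.ne', mul_one]
      _ < _ := h2
  calc (Bd.card : ℝ) < C * ((m : ℝ) * (1 / h)) * (g * (S.card : ℝ)) := hfin
    _ = ((m : ℝ) * C * g / h) * (S.card : ℝ) := by ring
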